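/- Let R be a commutative k-algebra with a connection ∇ on 𝔇 = Der(R). The kLT(𝔇)-module algebra structure on R determined by the rules: v(E) acts as E, u(E; v(F)) acts as ∇_F E, and subtrees whose root has one child may be replaced by the two-node tree labeled with the derivation they act as, is Leibnitz: for every tree T, every non-root node i with label factored as rE (r ∈ R, E ∈ 𝔇), and every s ∈ R, one has T·s = Σ_{(T_i)} (T_{i(1)}·r)(T(i, E, T_{i(2)})·s), where the coproduct is taken in the subtree T_i rooted at i. -/

import Mathlib

/-- An ordered labeled subtree: a node with a label and an ordered list of children. -/
inductive LSub (D : Type) : Type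
  | mk : D → List (LSub D) → LSub D

/-- An ordered rooted tree with unlabeled root and non-root nodes labeled in `D`,
represented by the list of subtrees attached to the root. -/
abbrev LTree (D : Type) := List (LSub D)

mutual
  /-- Number of nodes of a labeled subtree. -/
  def sizeS {D : Type} : LSub D → Nat
    | .mk _ ts => 1 + sizeL ts
  /-- Total number of (labeled) nodes of a forest. -/
  def sizeL {D : Type} : List (LSub D) → Nat
    | [] => 0
    | t :: ts => sizeS t + sizeL ts
end

mutual
  /-- Graft pending subtrees (given by `f`, indexed by the preorder index of nodes)
  onto a subtree whose own preorder index is `i`; attached subtrees are prepended. -/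
  def graftS {D : Type} (f : Nat → List (LSub D)) (i : Nat) : LSub D → LSub D
    | .mk d ts => .mk d (f i ++ graftL f (i + 1) ts)
  def graftL {D : Type} (f : Nat → List (LSub D)) (i : Nat) : List (LSub D) → List (LSub D)
    | [] => []
    | t :: ts => graftS f i t :: graftL f (i + sizeS t) ts
end

/-- Graft pending subtrees onto a tree; the root has preorder index `0`. -/
def graft {D : Type} (f : Nat → List (LSub D)) (t : LTree D) : LTree D :=
  f 0 ++ graftL f 1 t

/-- All lists of length `m` with entries `< n` (choices of attachment nodes). -/
def choices : Nat → Nat → List (List Nat)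
  | 0, _ => [[]]
  | m + 1, n => (List.range n).flatMap fun c => (choices m n).map (c :: ·)

/-- The Grossman–Larson product of two basis trees, as an element of the free module:
the sum over all ways of attaching the root-subtrees of `T1` to nodes of `T2`. -/
noncomputable def mulT (k : Type) [Semiring k] {D : Type} (T1 T2 : LTree D) :
    LTree D →₀ k :=
  ((choices T1.length (1 + sizeL T2)).map fun c =>
    Finsupp.single
      (graft (fun i => (T1.zip c).filterMap fun p => if p.2 = i then some p.1 else none) T2)
      (1 : k)).sum

/-- `v E`: the two-node tree whose single non-root node is labeled `E`. -/
def vT {D : Type} (E : D) : LTree D := [.mk E []]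

/-- `u(E; T₁,…,T_k)`: root has one child labeled `E`, with which the roots of the `Tᵢ`
are identified. -/
def uT {D : Type} (E : D) (Ts : List (LTree D)) : LTree D := [.mk E Ts.flatten]

/-- `t(T₁,…,T_k)`: identify the roots of the `Tᵢ`. -/
def tT {D : Type} (Ts : List (LTree D)) : LTree D := Ts.flatten

/-- All decompositions of an ordered multiset into a sub-multiset and its complement
(used for the coproduct). -/
def splits {α : Type} : List α → List (List α × List α)
  | [] => [([], [])]
  | a :: l => ((splits l).map fun p => (a :: p.1, p.2)) ++ ((splits l).map fun p => (p.1, a :: p.2))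

/-- The labeled node of `T` at position `(i, p)`: the `i`-th root-subtree, then follow
the path `p` of child indices. -/
def subAtL {D : Type} : List (LSub D) → Nat → List Nat → Option (LSub D)
  | [], _, _ => none
  | t :: _, 0, [] => some t
  | .mk _ cs :: _, 0, j :: p => subAtL cs j p
  | _ :: ts, i + 1, p => subAtL ts i p

/-- Replace the node of `T` at position `(i, p)`: relabel it with `G` and replace the
subtree rooted there (its list of children) by `T'`. -/
def replaceAtL {D : Type} (G : D) (T' : List (LSub D)) :
    List (LSub D) → Nat → List Nat → List (LSub D)
  | [], _, _ => []
  | _ :: ts, 0, [] => .mk G T' :: ts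
  | .mk d cs :: ts, 0, j :: p => .mk d (replaceAtL G T' cs j p) :: ts
  | t :: ts, i + 1, p => t :: replaceAtL G T' ts i p

/-- A `kLT(𝔇)`-module algebra structure on `R` (𝔇 = Der(R)), described via the action
`act` of basis trees: the one-node tree acts as the identity, each tree acts `k`-linearly,
the action is compatible with the tree-attachment product, and satisfies the module
algebra (Hopf) condition with respect to the splitting coproduct. -/
def IsTreeAction (k R : Type) [CommRing k] [CommRing R] [Algebra k R]
    (act : LTree (Derivation k R R) → R → R) : Prop :=
  (∀ f : R, act [] f = f) ∧
  (∀ (T : LTree (Derivation k R R)) (a : k) (f g : R),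
    act T (a • f + g) = a • act T f + act T g) ∧
  (∀ (T₁ T₂ : LTree (Derivation k R R)) (f : R),
    ((mulT k T₁ T₂).sum fun T c => c • act T f) = act T₁ (act T₂ f)) ∧
  (∀ (T : LTree (Derivation k R R)) (f g : R),
    act T (f * g) = ((splits T).map fun q => act q.1 f * act q.2 g).sum)

/-- The `kLT(𝔇)`-module algebra structure `act` is *Leibnitz* if for every tree `T`,
every non-root node (at position `(i, p)`) whose label factors as `r • E`, and every
`s ∈ R`, `T·s = Σ_{(T_i)} (T_{i(1)}·r) (T(i, E, T_{i(2)})·s)`, the coproduct being taken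
in the subtree `T_i` rooted at the node. -/
def IsLeibnitz (k R : Type) [CommRing k] [CommRing R] [Algebra k R]
    (act : LTree (Derivation k R R) → R → R) : Prop :=
  ∀ (T : LTree (Derivation k R R)) (i : Nat) (p : List Nat)
    (D₀ : Derivation k R R) (Ti : List (LSub (Derivation k R R))),
    subAtL T i p = some (LSub.mk D₀ Ti) →
    ∀ (r : R) (E : Derivation k R R), D₀ = r • E →
    ∀ s : R,
      act T s =
        ((splits Ti).map fun q => act q.1 r * act (replaceAtL E q.2 T i p) s).sum

/-- The action `act` is *coherent* if any subtree whose root has a single child and which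
acts on `R` as a derivation `E` may be replaced by the two-node tree `v(E)` without
changing the action of the ambient tree. -/
def IsCoherent (k R : Type) [CommRing k] [CommRing R] [Algebra k R]
    (act : LTree (Derivation k R R) → R → R) : Prop :=
  ∀ (T : LTree (Derivation k R R)) (i : Nat) (p : List Nat)
    (d : Derivation k R R) (cs : List (LSub (Derivation k R R))) (E : Derivation k R R),
    subAtL T i p = some (LSub.mk d cs) →
    (∀ f : R, act [LSub.mk d cs] f = E f) →
    ∀ f : R, act T f = act (replaceAtL E [] T i p) f

/-- A connection on `Der(R)`. -/
def IsConnection (k R : Type) [CommRing k] [CommRing R] [Algebra k R]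
    (c : Derivation k R R → Derivation k R R → Derivation k R R) : Prop :=
  (∀ E₁ E₂ F, c (E₁ + E₂) F = c E₁ F + c E₂ F) ∧
  (∀ E F₁ F₂, c E (F₁ + F₂) = c E F₁ + c E F₂) ∧
  (∀ (f : R) (E F), c (f • E) F = f • c E F) ∧
  (∀ (f : R) (E F), c E (f • F) = f • c E F + (E f) • F)


/-! ### Auxiliary development for the proof -/

namespace CAL

/-! #### Generic list sum helpers -/

section SumHelpers

variable {α β M : Type*}

theorem sum_map_zero [AddCommMonoid M] (l : List α) :
    (l.map fun _ => (0 : M)).sum = 0 := by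
  induction l <;> simp_all

theorem sum_map_add [AddCommMonoid M] (l : List α) (f g : α → M) :
    (l.map fun x => f x + g x).sum = (l.map f).sum + (l.map g).sum := by
  induction l with
  | nil => simp
  | cons x l ih => simp only [List.map_cons, List.sum_cons, ih]; abel

theorem sum_map_mul_left [NonUnitalNonAssocSemiring M] (l : List α) (a : M) (f : α → M) :
    (l.map fun x => a * f x).sum = a * (l.map f).sum := by
  induction l <;> simp_all [mul_add]

theorem sum_map_swap [AddCommMonoid M] (l : List α) (l' : List β) (F : α → β → M) :
    (l.map fun x => (l'.map fun y => F x y).sum).sum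
      = (l'.map fun y => (l.map fun x => F x y).sum).sum := by
  induction l with
  | nil => simp [sum_map_zero]
  | cons x l ih => simp only [List.map_cons, List.sum_cons, ih, ← sum_map_add]

end SumHelpers

/-! #### `splits` and one-point variations -/

theorem splits_nil {α : Type} : splits ([] : List α) = [([], [])] := rfl

theorem splits_cons {α : Type} (a : α) (l : List α) :
    splits (a :: l) = ((splits l).map fun p => (a :: p.1, p.2))
      ++ ((splits l).map fun p => (p.1, a :: p.2)) := rfl

/-- All lists obtained from `l` by replacing exactly one entry `a` by an element
of `V a`. -/
def varyOne {α : Type} (V : α → List α) : List α → List (List α)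
  | [] => []
  | a :: l => ((V a).map (· :: l)) ++ ((varyOne V l).map (a :: ·))

theorem sum_splits_cons {M : Type*} [AddCommMonoid M] {α : Type} (a : α) (l : List α)
    (f : List α × List α → M) :
    ((splits (a :: l)).map f).sum
      = ((splits l).map fun q => f (a :: q.1, q.2)).sum
        + ((splits l).map fun q => f (q.1, a :: q.2)).sum := by
  simp [splits_cons, List.map_map, Function.comp_def]

/-- The key combinatorial fact: summing over all one-point variations of `l` and then
over all splits equals summing over all splits of `l` and then varying one point on
either side. -/
theorem splits_vary {M : Type*} [AddCommMonoid M] {α : Type} (V : α → List α)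
    (f : List α × List α → M) :
    ∀ l : List α,
      ((varyOne V l).map fun u => ((splits u).map f).sum).sum
        = ((splits l).map fun q =>
            ((varyOne V q.1).map fun u => f (u, q.2)).sum
              + ((varyOne V q.2).map fun u => f (q.1, u)).sum).sum := by
  intro l
  induction l generalizing f with
  | nil => simp [varyOne, splits_nil]
  | cons a l ih =>
    rw [varyOne, List.map_append, List.sum_append, List.map_map, List.map_map]
    -- first part : vary the head
    have h1 : ((V a).map ((fun u => ((splits u).map f).sum) ∘ (· :: l))).sum
        = ((V a).map fun b => ((splits l).map fun q => f (b :: q.1, q.2)).sum).sum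
          + ((V a).map fun b => ((splits l).map fun q => f (q.1, b :: q.2)).sum).sum := by
      rw [← sum_map_add]
      refine congrArg _ (List.map_congr_left fun b _ => ?_)
      simp only [Function.comp]
      exact sum_splits_cons b l f
    -- second part : vary in the tail
    have h2 : ((varyOne V l).map ((fun u => ((splits u).map f).sum) ∘ (a :: ·))).sum
        = ((varyOne V l).map fun u => ((splits u).map fun q => f (a :: q.1, q.2)).sum).sum
          + ((varyOne V l).map fun u => ((splits u).map fun q => f (q.1, a :: q.2)).sum).sum := by
      rw [← sum_map_add]
      refine congrArg _ (List.map_congr_left fun u _ => ?_)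
      simp only [Function.comp]
      exact sum_splits_cons a u _
    rw [h1, h2, ih (fun q => f (a :: q.1, q.2)), ih (fun q => f (q.1, a :: q.2))]
    rw [sum_splits_cons a l
      (fun q => ((varyOne V q.1).map fun u => f (u, q.2)).sum
        + ((varyOne V q.2).map fun u => f (q.1, u)).sum)]
    simp only [varyOne, List.map_append, List.sum_append, List.map_map, Function.comp_def,
      sum_map_add]
    rw [sum_map_swap (V a) (splits l) (fun b q => f (b :: q.1, q.2)),
        sum_map_swap (V a) (splits l) (fun b q => f (q.1, b :: q.2))]
    abel

end CAL

namespace CAL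

variable {D : Type}

/-! #### Attaching a subtree at each node -/

mutual
  /-- All subtrees obtained from `t` by attaching `c` as a new first child of
  one node of `t` (in preorder). -/
  def attS (c : LSub D) : LSub D → List (LSub D)
    | .mk d cs => .mk d (c :: cs) :: (attL c cs).map (fun u => .mk d u)
  /-- All forests obtained from `ts` by attaching `c` as a new first child of
  one node of `ts` (in preorder). -/
  def attL (c : LSub D) : List (LSub D) → List (List (LSub D))
    | [] => []
    | t :: ts => ((attS c t).map (· :: ts)) ++ ((attL c ts).map (t :: ·))
end

theorem attL_eq_varyOne (c : LSub D) : ∀ l : List (LSub D), attL c l = varyOne (attS c) l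
  | [] => rfl
  | t :: ts => by rw [attL, varyOne, attL_eq_varyOne c ts]

@[simp] theorem sizeS_mk (d : D) (cs : List (LSub D)) : sizeS (.mk d cs) = 1 + sizeL cs := rfl
@[simp] theorem sizeL_nil : sizeL ([] : List (LSub D)) = 0 := rfl
@[simp] theorem sizeL_cons (t : LSub D) (ts : List (LSub D)) :
    sizeL (t :: ts) = sizeS t + sizeL ts := rfl

theorem sizeS_pos : ∀ t : LSub D, 1 ≤ sizeS t
  | .mk _ ts => by simp

theorem sizeL_append : ∀ (A B : List (LSub D)), sizeL (A ++ B) = sizeL A + sizeL B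
  | [], B => by simp
  | a :: A, B => by simp [sizeL_append A B]; ring

mutual
  theorem attS_size (c : LSub D) : ∀ (t : LSub D), ∀ u ∈ attS c t,
      sizeS u = sizeS c + sizeS t
    | .mk d cs => by
      intro u hu
      simp only [attS, List.mem_cons, List.mem_map] at hu
      rcases hu with rfl | ⟨u', hu', rfl⟩
      · simp; ring
      · have := attL_size c cs u' hu'
        simp [this]; ring
  theorem attL_size (c : LSub D) : ∀ (ts : List (LSub D)), ∀ u ∈ attL c ts,
      sizeL u = sizeS c + sizeL ts
    | [] => by intro u hu; simp [attL] at hu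
    | t :: ts => by
      intro u hu
      simp only [attL, List.mem_append, List.mem_map] at hu
      rcases hu with ⟨u', hu', rfl⟩ | ⟨u', hu', rfl⟩
      · have := attS_size c t u' hu'
        simp [this]; ring
      · have := attL_size c ts u' hu'
        simp [this]; ring
end

theorem attL_length_eq (c : LSub D) : ∀ (ts : List (LSub D)), ∀ u ∈ attL c ts,
    u.length = ts.length
  | [] => by intro u hu; simp [attL] at hu
  | t :: ts => by
    intro u hu
    simp only [attL, List.mem_append, List.mem_map] at hu
    rcases hu with ⟨u', _, rfl⟩ | ⟨u', hu', rfl⟩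
    · simp
    · simp [attL_length_eq c ts u' hu']

/-! #### Depth weight -/

mutual
  /-- Sum of the depths of the nodes of a subtree (the root of the subtree having
  depth `1`). -/
  def WS : LSub D → Nat
    | .mk _ cs => 1 + WL cs + sizeL cs
  /-- Sum of the depths of the nodes of a forest. -/
  def WL : List (LSub D) → Nat
    | [] => 0
    | t :: ts => WS t + WL ts
end

@[simp] theorem WS_mk (d : D) (cs : List (LSub D)) : WS (.mk d cs) = 1 + WL cs + sizeL cs := rfl
@[simp] theorem WL_nil : WL ([] : List (LSub D)) = 0 := rfl
@[simp] theorem WL_cons (t : LSub D) (ts : List (LSub D)) : WL (t :: ts) = WS t + WL ts := rfl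

mutual
  theorem WS_le_sq : ∀ t : LSub D, WS t ≤ sizeS t * sizeS t
    | .mk d cs => by
      have h := WL_le_sq cs
      simp only [WS_mk, sizeS_mk]
      nlinarith [h]
  theorem WL_le_sq : ∀ ts : List (LSub D), WL ts ≤ sizeL ts * sizeL ts
    | [] => by simp
    | t :: ts => by
      have h1 := WS_le_sq t
      have h2 := WL_le_sq ts
      simp only [WL_cons, sizeL_cons]
      nlinarith [h1, h2]
end

mutual
  theorem attS_W (c : LSub D) : ∀ (t : LSub D), ∀ u ∈ attS c t,
      WS t + WS c + sizeS c ≤ WS u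
    | .mk d cs => by
      intro u hu
      simp only [attS, List.mem_cons, List.mem_map] at hu
      rcases hu with rfl | ⟨u', hu', rfl⟩
      · simp; omega
      · have h1 := attL_W c cs u' hu'
        have h2 := attL_size c cs u' hu'
        have h3 := sizeS_pos c
        simp only [WS_mk]
        omega
  theorem attL_W (c : LSub D) : ∀ (ts : List (LSub D)), ∀ u ∈ attL c ts,
      WL ts + WS c + sizeS c ≤ WL u
    | [] => by intro u hu; simp [attL] at hu
    | t :: ts => by
      intro u hu
      simp only [attL, List.mem_append, List.mem_map] at hu
      rcases hu with ⟨u', hu', rfl⟩ | ⟨u', hu', rfl⟩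
      · have := attS_W c t u' hu'
        simp only [WL_cons]; omega
      · have := attL_W c ts u' hu'
        simp only [WL_cons]; omega
end

/-! #### Positions: basic lemmas -/

/-- The labeled node of a subtree at path `p` (`[]` is the root of the subtree). -/
def subAtS : LSub D → List Nat → Option (LSub D)
  | t, [] => some t
  | .mk _ cs, j :: p => subAtL cs j p

/-- Replace the node of a subtree at path `p` : relabel with `G`, children become `T'`. -/
def replaceAtS (G : D) (T' : List (LSub D)) : LSub D → List Nat → LSub D
  | _, [] => .mk G T'
  | .mk d cs, j :: p => .mk d (replaceAtL G T' cs j p)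

@[simp] theorem subAtL_nil (i : Nat) (p : List Nat) :
    subAtL ([] : List (LSub D)) i p = none := by cases p <;> simp [subAtL]

theorem subAtL_cons_zero (t : LSub D) (ts : List (LSub D)) (p : List Nat) :
    subAtL (t :: ts) 0 p = subAtS t p := by
  cases t with | mk d cs => cases p <;> simp [subAtL, subAtS]

theorem subAtL_cons_succ (t : LSub D) (ts : List (LSub D)) (i : Nat) (p : List Nat) :
    subAtL (t :: ts) (i + 1) p = subAtL ts i p := by
  cases t with | mk d cs => cases p <;> simp [subAtL]

theorem replaceAtL_cons_zero (G : D) (T' : List (LSub D)) (t : LSub D) (ts : List (LSub D))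
    (p : List Nat) : replaceAtL G T' (t :: ts) 0 p = replaceAtS G T' t p :: ts := by
  cases t with | mk d cs => cases p <;> simp [replaceAtL, replaceAtS]

theorem replaceAtL_cons_succ (G : D) (T' : List (LSub D)) (t : LSub D) (ts : List (LSub D))
    (i : Nat) (p : List Nat) :
    replaceAtL G T' (t :: ts) (i + 1) p = t :: replaceAtL G T' ts i p := by
  cases t with | mk d cs => cases p <;> simp [replaceAtL]

theorem subAtL_append (A B : List (LSub D)) (i : Nat) (p : List Nat) :
    subAtL (A ++ B) (A.length + i) p = subAtL B i p := by
  induction A with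
  | nil => simp
  | cons a A ih =>
    have : (a :: A).length + i = (A.length + i) + 1 := by simp; omega
    rw [this, List.cons_append, subAtL_cons_succ]
    exact ih

theorem replaceAtL_append (G : D) (T' : List (LSub D)) (A B : List (LSub D)) (i : Nat)
    (p : List Nat) :
    replaceAtL G T' (A ++ B) (A.length + i) p = A ++ replaceAtL G T' B i p := by
  induction A with
  | nil => simp
  | cons a A ih =>
    have : (a :: A).length + i = (A.length + i) + 1 := by simp; omega
    rw [this, List.cons_append, replaceAtL_cons_succ, ih, List.cons_append]

end CAL

namespace CAL

variable {D : Type}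

/-! #### One-hole contexts -/

/-- One step of a one-hole context around a forest. -/
inductive Frame (D : Type) : Type
  | shift (pre : List (LSub D))
  | deeper (pre : List (LSub D)) (d : D) (post : List (LSub D))

/-- A one-hole context: the hole is a forest; frames are applied innermost first. -/
abbrev Ctx (D : Type) := List (Frame D)

/-- Apply one frame. -/
def fillF : Frame D → List (LSub D) → List (LSub D)
  | .shift pre, Y => pre ++ Y
  | .deeper pre d post, Y => pre ++ (.mk d Y) :: post

/-- Fill the hole of a context with a forest. -/
def fill : Ctx D → List (LSub D) → List (LSub D)
  | [], Y => Y
  | f :: K, Y => fill K (fillF f Y)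

/-- Transport of positions along one frame. -/
def posF : Frame D → Nat × List Nat → Nat × List Nat
  | .shift pre, (i, p) => (pre.length + i, p)
  | .deeper pre _ _, (i, p) => (pre.length, i :: p)

/-- Transport of positions along a context. -/
def posC : Ctx D → Nat × List Nat → Nat × List Nat
  | [], ip => ip
  | f :: K, ip => posC K (posF f ip)

theorem subAt_fillF (f : Frame D) (Y : List (LSub D)) (i : Nat) (p : List Nat) :
    subAtL (fillF f Y) (posF f (i, p)).1 (posF f (i, p)).2 = subAtL Y i p := by
  cases f with
  | shift pre => simpa [fillF, posF] using subAtL_append pre Y i p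
  | deeper pre d post =>
    show subAtL (pre ++ (LSub.mk d Y) :: post) pre.length (i :: p) = _
    have h := subAtL_append pre ((LSub.mk d Y) :: post) 0 (i :: p)
    rw [Nat.add_zero] at h
    rw [h]
    simp [subAtL]

theorem replace_fillF (G : D) (T' : List (LSub D)) (f : Frame D) (Y : List (LSub D))
    (i : Nat) (p : List Nat) :
    replaceAtL G T' (fillF f Y) (posF f (i, p)).1 (posF f (i, p)).2
      = fillF f (replaceAtL G T' Y i p) := by
  cases f with
  | shift pre => simpa [fillF, posF] using replaceAtL_append G T' pre Y i p
  | deeper pre d post =>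
    show replaceAtL G T' (pre ++ (LSub.mk d Y) :: post) pre.length (i :: p) = _
    have h := replaceAtL_append G T' pre ((LSub.mk d Y) :: post) 0 (i :: p)
    rw [Nat.add_zero] at h
    rw [h]
    simp [fillF, replaceAtL]

theorem subAt_fill (K : Ctx D) (Y : List (LSub D)) (i : Nat) (p : List Nat) :
    subAtL (fill K Y) (posC K (i, p)).1 (posC K (i, p)).2 = subAtL Y i p := by
  induction K generalizing Y i p with
  | nil => rfl
  | cons f K ih =>
    show subAtL (fill K (fillF f Y)) (posC K (posF f (i, p))).1 (posC K (posF f (i, p))).2 = _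
    exact (ih (fillF f Y) (posF f (i, p)).1 (posF f (i, p)).2).trans (subAt_fillF f Y i p)

theorem replace_fill (G : D) (T' : List (LSub D)) (K : Ctx D) (Y : List (LSub D))
    (i : Nat) (p : List Nat) :
    replaceAtL G T' (fill K Y) (posC K (i, p)).1 (posC K (i, p)).2
      = fill K (replaceAtL G T' Y i p) := by
  induction K generalizing Y i p with
  | nil => rfl
  | cons f K ih =>
    show replaceAtL G T' (fill K (fillF f Y)) (posC K (posF f (i, p))).1
        (posC K (posF f (i, p))).2 = _
    rw [ih (fillF f Y) (posF f (i, p)).1 (posF f (i, p)).2, replace_fillF G T' f Y i p]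
    rfl

end CAL

namespace CAL

variable {D : Type}

/-! #### Grafting a single pending subtree -/

/-- The pending-subtrees function attaching exactly `c` at preorder index `j`. -/
def delta (j : Nat) (c : LSub D) : Nat → List (LSub D) := fun i => if j = i then [c] else []

mutual
  theorem graftS_out (c : LSub D) : ∀ (t : LSub D) (base j : Nat),
      (j < base ∨ base + sizeS t ≤ j) → graftS (delta j c) base t = t
    | .mk d cs, base, j => by
      intro h
      rw [graftS]
      have h1 : delta j c base = [] := by
        have : j ≠ base := by simp at h; omega
        simp [delta, this]
      rw [h1, graftL_out c cs (base + 1) j (by simp at h ⊢; omega)]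
      simp
  theorem graftL_out (c : LSub D) : ∀ (ts : List (LSub D)) (base j : Nat),
      (j < base ∨ base + sizeL ts ≤ j) → graftL (delta j c) base ts = ts
    | [], base, j => by intro h; rw [graftL]
    | t :: ts, base, j => by
      intro h
      rw [graftL, graftS_out c t base j (by have := sizeS_pos t; simp at h ⊢; omega),
        graftL_out c ts (base + sizeS t) j (by simp at h ⊢; omega)]
end

mutual
  theorem graftS_enum (c : LSub D) : ∀ (t : LSub D) (base : Nat),
      (List.range (sizeS t)).map (fun o => graftS (delta (base + o) c) base t) = attS c t
    | .mk d cs, base => by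
      rw [sizeS_mk, Nat.add_comm 1 (sizeL cs), List.range_succ_eq_map, List.map_cons]
      have h0 : graftS (delta (base + 0) c) base (.mk d cs) = .mk d (c :: cs) := by
        rw [graftS, graftL_out c cs (base + 1) (base + 0) (by omega)]
        simp [delta]
      rw [h0, List.map_map]
      have h1 : ((List.range (sizeL cs)).map
            ((fun o => graftS (delta (base + o) c) base (.mk d cs)) ∘ Nat.succ))
          = (List.range (sizeL cs)).map
            (fun o => LSub.mk d (graftL (delta ((base + 1) + o) c) (base + 1) cs)) := by
        refine List.map_congr_left fun o _ => ?_
        show graftS (delta (base + (o + 1)) c) base (.mk d cs) = _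
        rw [graftS]
        have hne : delta (base + (o + 1)) c base = [] := by
          unfold delta; rw [if_neg (by omega)]
        rw [hne]
        have : base + (o + 1) = (base + 1) + o := by omega
        rw [this]
        simp
      rw [h1]
      have h2 : (List.range (sizeL cs)).map
            (fun o => LSub.mk d (graftL (delta ((base + 1) + o) c) (base + 1) cs))
          = ((List.range (sizeL cs)).map
              (fun o => graftL (delta ((base + 1) + o) c) (base + 1) cs)).map
            (fun u => LSub.mk d u) := by
        rw [List.map_map]; rfl
      rw [h2, graftL_enum c cs (base + 1), attS]
  theorem graftL_enum (c : LSub D) : ∀ (ts : List (LSub D)) (base : Nat),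
      (List.range (sizeL ts)).map (fun o => graftL (delta (base + o) c) base ts) = attL c ts
    | [], base => by rw [sizeL_nil, attL]; rfl
    | t :: ts, base => by
      rw [sizeL_cons, List.range_add, List.map_append, List.map_map]
      have h1 : (List.range (sizeS t)).map (fun o => graftL (delta (base + o) c) base (t :: ts))
          = ((List.range (sizeS t)).map (fun o => graftS (delta (base + o) c) base t)).map
              (· :: ts) := by
        rw [List.map_map]
        refine List.map_congr_left fun o ho => ?_
        rw [List.mem_range] at ho
        show graftL (delta (base + o) c) base (t :: ts) = _
        rw [graftL, graftL_out c ts (base + sizeS t) (base + o) (by omega)]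
        rfl
      have h2 : (List.range (sizeL ts)).map
            ((fun o => graftL (delta (base + o) c) base (t :: ts)) ∘ (sizeS t + ·))
          = ((List.range (sizeL ts)).map
              (fun o => graftL (delta ((base + sizeS t) + o) c) (base + sizeS t) ts)).map
            (t :: ·) := by
        rw [List.map_map]
        refine List.map_congr_left fun o _ => ?_
        show graftL (delta (base + (sizeS t + o)) c) base (t :: ts) = _
        rw [graftL, graftS_out c t base (base + (sizeS t + o)) (by omega)]
        have : base + (sizeS t + o) = (base + sizeS t) + o := by omega
        rw [this]
        rfl
      rw [h1, h2, graftS_enum c t base, graftL_enum c ts (base + sizeS t), attL]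
end

/-- Grafting `delta j c` on a full tree, for `j = 0`. -/
theorem graft_delta_zero (c : LSub D) (ts : List (LSub D)) :
    graft (delta 0 c) ts = c :: ts := by
  rw [graft, graftL_out c ts 1 0 (by omega)]
  simp [delta]

theorem graft_delta_succ (c : LSub D) (ts : List (LSub D)) (o : Nat) :
    graft (delta (o + 1) c) ts = graftL (delta (1 + o) c) 1 ts := by
  rw [graft]
  have : delta (o + 1) c 0 = [] := by simp [delta]
  rw [this]
  have : o + 1 = 1 + o := by omega
  rw [this]
  rfl

/-- Enumeration of all single graftings on a tree. -/
theorem graft_enum (c : LSub D) (ts : List (LSub D)) :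
    (List.range (1 + sizeL ts)).map (fun j => graft (delta j c) ts)
      = (c :: ts) :: (attL c ts) := by
  rw [Nat.add_comm 1 (sizeL ts), List.range_succ_eq_map, List.map_cons, graft_delta_zero,
    List.map_map]
  have h : (List.range (sizeL ts)).map ((fun j => graft (delta j c) ts) ∘ Nat.succ)
      = (List.range (sizeL ts)).map (fun o => graftL (delta (1 + o) c) 1 ts) := by
    refine List.map_congr_left fun o _ => ?_
    exact graft_delta_succ c ts o
  rw [h, graftL_enum c ts 1]

end CAL

namespace CAL

/-! #### The setup bundling all hypotheses -/

variable (k R : Type) [CommRing k] [CommRing R] [Algebra k R]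

/-- All the data and hypotheses of the construction. -/
structure Setup where
  co : Derivation k R R → Derivation k R R → Derivation k R R
  hc : IsConnection k R co
  act : LTree (Derivation k R R) → R → R
  hact : IsTreeAction k R act
  hcoh : IsCoherent k R act
  hder : ∀ t : LSub (Derivation k R R), ∃ E : Derivation k R R, ∀ f, act [t] f = E f
  hv : ∀ (E : Derivation k R R) (f : R), act (vT E) f = E f
  hu : ∀ (E F : Derivation k R R) (f : R), act (uT E [vT F]) f = (co F E) f

namespace Setup

variable {k R : Type} [CommRing k] [CommRing R] [Algebra k R] (St : Setup k R)

/-- The derivation by which a one-root-subtree tree acts. -/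
noncomputable def e (t : LSub (Derivation k R R)) : Derivation k R R :=
  (St.hder t).choose

theorem e_spec (t : LSub (Derivation k R R)) (f : R) : St.act [t] f = St.e t f :=
  (St.hder t).choose_spec f

theorem listsum_deriv_apply {α : Type} (l : List α) (Dl : α → Derivation k R R) (x : R) :
    ((l.map Dl).sum) x = (l.map fun a => Dl a x).sum := by
  induction l with
  | nil => simp
  | cons a l ih => simp [ih]

theorem co_zero_right (F : Derivation k R R) : St.co F 0 = 0 := by
  have h : St.co F 0 = St.co F 0 + St.co F 0 := by
    conv_lhs => rw [show (0 : Derivation k R R) = 0 + 0 by simp, St.hc.2.1 F 0 0]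
  exact (add_eq_left.mp h.symm)

theorem co_zero_left (d : Derivation k R R) : St.co 0 d = 0 := by
  have h : St.co 0 d = St.co 0 d + St.co 0 d := by
    conv_lhs => rw [show (0 : Derivation k R R) = 0 + 0 by simp, St.hc.1 0 0 d]
  exact (add_eq_left.mp h.symm)

theorem co_right_sum {α : Type} (F : Derivation k R R) (l : List α) (a : α → R)
    (G : α → Derivation k R R) (x : R) :
    (St.co F ((l.map fun q => a q • G q).sum)) x
      = (l.map fun q => a q * (St.co F (G q)) x + F (a q) * (G q) x).sum := by
  induction l with
  | nil => simp [co_zero_right]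
  | cons b l ih =>
    simp only [List.map_cons, List.sum_cons]
    rw [St.hc.2.1 F (a b • G b) ((l.map fun q => a q • G q).sum), St.hc.2.2.2 (a b) F (G b)]
    simp only [Derivation.add_apply, Derivation.smul_apply, smul_eq_mul]
    rw [ih]

theorem co_left_sum {α : Type} (d : Derivation k R R) (l : List α) (a : α → R)
    (G : α → Derivation k R R) (x : R) :
    (St.co ((l.map fun q => a q • G q).sum) d) x
      = (l.map fun q => a q * (St.co (G q) d) x).sum := by
  induction l with
  | nil => simp [co_zero_left]
  | cons b l ih =>
    simp only [List.map_cons, List.sum_cons]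
    rw [St.hc.1 (a b • G b) ((l.map fun q => a q • G q).sum) d, St.hc.2.2.1 (a b) (G b) d]
    simp only [Derivation.add_apply, Derivation.smul_apply, smul_eq_mul]
    rw [ih]

theorem finsupp_sum_singles (L : List (LTree (Derivation k R R)))
    (φ : LTree (Derivation k R R) → R) :
    ((L.map fun t => Finsupp.single t (1:k)).sum).sum (fun T cf => cf • φ T) = (L.map φ).sum := by
  induction L with
  | nil => simp
  | cons t ts ih =>
    simp only [List.map_cons, List.sum_cons]
    rw [Finsupp.sum_add_index' (by intro a; simp) (by intro a b1 b2; rw [add_smul]), ih,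
      Finsupp.sum_single_index (by simp)]
    simp

/-- The basic "peeling" consequence of compatibility with the Grossman–Larson product. -/
theorem peel (c : LSub (Derivation k R R)) (ts : LTree (Derivation k R R)) (f : R) :
    St.act (c :: ts) f + ((attL c ts).map fun u => St.act u f).sum
      = St.e c (St.act ts f) := by
  have h3 := St.hact.2.2.1 [c] ts f
  have hch : choices ([c] : LTree (Derivation k R R)).length (1 + sizeL ts)
      = (List.range (1 + sizeL ts)).map (fun j => [j]) := by
    show choices 1 _ = _
    rw [choices, choices]
    simp only [List.map_cons, List.map_nil]
    induction (List.range (1 + sizeL ts)) with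
    | nil => rfl
    | cons a l ih => simp [List.flatMap_cons, ih]
  rw [mulT, hch, List.map_map] at h3
  have hgr : ((List.range (1 + sizeL ts)).map
        ((fun ch => Finsupp.single
            (graft (fun i => (([c] : LTree (Derivation k R R)).zip ch).filterMap
              fun p => if p.2 = i then some p.1 else none) ts) (1 : k)) ∘ (fun j => [j])))
      = ((c :: ts) :: attL c ts).map (fun u => Finsupp.single u (1 : k)) := by
    rw [← graft_enum c ts, List.map_map]
    refine List.map_congr_left fun j _ => ?_
    simp only [Function.comp]
    congr 1
    refine congrArg (fun g => graft g ts) ?_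
    funext i
    by_cases h : j = i <;> simp [delta, h, List.zip]
  rw [hgr, finsupp_sum_singles] at h3
  simp only [List.map_cons, List.sum_cons] at h3
  rw [h3, St.e_spec c (St.act ts f)]

end Setup

end CAL

namespace CAL

namespace Setup

variable {k R : Type} [CommRing k] [CommRing R] [Algebra k R] (St : Setup k R)

@[simp] theorem subAtS_nil (t : LSub (Derivation k R R)) : subAtS t [] = some t := by
  cases t; rw [subAtS]

theorem subAtS_cons (d : Derivation k R R) (cs : List (LSub (Derivation k R R)))
    (j : Nat) (p : List Nat) : subAtS (.mk d cs) (j :: p) = subAtL cs j p := by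
  rw [subAtS]

@[simp] theorem replaceAtS_nil (G : Derivation k R R) (T' : List (LSub (Derivation k R R)))
    (t : LSub (Derivation k R R)) : replaceAtS G T' t [] = .mk G T' := by
  cases t; rw [replaceAtS]

theorem replaceAtS_cons (G : Derivation k R R) (T' : List (LSub (Derivation k R R)))
    (d : Derivation k R R) (cs : List (LSub (Derivation k R R))) (j : Nat) (p : List Nat) :
    replaceAtS G T' (.mk d cs) (j :: p) = .mk d (replaceAtL G T' cs j p) := by
  rw [replaceAtS]

theorem act_leaf (G : Derivation k R R) (f : R) : St.act [LSub.mk G []] f = G f :=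
  St.hv G f

theorem act_u (G F : Derivation k R R) (f : R) :
    St.act [LSub.mk G [LSub.mk F []]] f = (St.co F G) f := by
  have h := St.hu G F f
  simpa [uT, vT] using h

/-- Collapsing the second root-subtree of a two-subtree tree. -/
theorem act_pair_collapse (c t : LSub (Derivation k R R)) (f : R) :
    St.act [c, t] f = St.act [c, .mk (St.e t) []] f := by
  obtain ⟨d, cs⟩ := t
  have hsub : subAtL [c, LSub.mk d cs] 1 [] = some (LSub.mk d cs) := by
    rw [subAtL_cons_succ, subAtL_cons_zero]
    rfl
  have h := St.hcoh [c, LSub.mk d cs] 1 [] d cs (St.e (.mk d cs)) hsub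
    (fun f => St.e_spec (.mk d cs) f) f
  rw [h, replaceAtL_cons_succ, replaceAtL_cons_zero]
  rfl

/-- Collapsing the unique child of the root-child in `[mk G [c]]`. -/
theorem act_chain_collapse (G : Derivation k R R) (c : LSub (Derivation k R R)) (f : R) :
    St.act [.mk G [c]] f = (St.co (St.e c) G) f := by
  obtain ⟨d, cs⟩ := c
  have hsub : subAtL [LSub.mk G [LSub.mk d cs]] 0 [0] = some (LSub.mk d cs) := by
    rw [subAtL_cons_zero, subAtS_cons, subAtL_cons_zero, subAtS_nil]
  have h := St.hcoh [LSub.mk G [LSub.mk d cs]] 0 [0] d cs (St.e (.mk d cs)) hsub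
    (fun f => St.e_spec (.mk d cs) f) f
  rw [h, replaceAtL_cons_zero, replaceAtS_cons, replaceAtL_cons_zero, replaceAtS_nil]
  exact St.act_u G (St.e (.mk d cs)) f

theorem act_pair_leaf (c : LSub (Derivation k R R)) (G : Derivation k R R) (f : R) :
    St.act [c, .mk G []] f + (St.co (St.e c) G) f = St.e c (G f) := by
  have hp := St.peel c [LSub.mk G []] f
  have hattl : attL c [LSub.mk G []] = [[LSub.mk G [c]]] := by
    rw [attL, attL, attS, attL]
    simp
  rw [hattl] at hp
  simp only [List.map_cons, List.map_nil, List.sum_cons, List.sum_nil, add_zero] at hp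
  rw [St.act_chain_collapse G c f, St.act_leaf G f] at hp
  exact hp

theorem attL_singleton (cS t : LSub (Derivation k R R)) :
    attL cS [t] = (attS cS t).map (fun u => [u]) := by
  rw [attL, attL]
  simp

/-- The key recursion: peeling the first child of the root-child of a one-subtree tree. -/
theorem key' (d : Derivation k R R) (cS : LSub (Derivation k R R))
    (L : List (LSub (Derivation k R R))) (s : R) :
    St.act [.mk d (cS :: L)] s + ((attL cS L).map fun u => St.act [.mk d u] s).sum
      = St.act [.mk (St.e (.mk d L)) [cS]] s := by
  have hp := St.peel cS [LSub.mk d L] s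
  have hattl : attL cS [LSub.mk d L]
      = ([LSub.mk d (cS :: L)]) :: (attL cS L).map (fun u => [LSub.mk d u]) := by
    rw [attL_singleton, attS]
    simp [List.map_map]
  rw [hattl] at hp
  simp only [List.map_cons, List.sum_cons, List.map_map, Function.comp_def] at hp
  have c1 := St.act_pair_collapse cS (.mk d L) s
  have c2 := St.act_pair_leaf cS (St.e (.mk d L)) s
  have c3 := St.act_chain_collapse (St.e (.mk d L)) cS s
  have c4 := St.e_spec (.mk d L) s
  show St.act [.mk d (cS :: L)] s
      + ((attL cS L).map fun u => St.act [LSub.mk d u] s).sum = _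
  have hp' : St.act (cS :: [LSub.mk d L]) s = St.act [cS, LSub.mk d L] s := rfl
  rw [hp', c1] at hp
  rw [c4] at hp
  linear_combination hp - c2 - c3

theorem key (d : Derivation k R R) (cS : LSub (Derivation k R R))
    (L : List (LSub (Derivation k R R))) (s : R) :
    St.act [.mk d (cS :: L)] s + ((attL cS L).map fun u => St.act [.mk d u] s).sum
      = (St.co (St.e cS) (St.e (.mk d L))) s :=
  (St.key' d cS L s).trans (St.act_chain_collapse (St.e (.mk d L)) cS s)

/-- If a one-subtree action satisfies the Leibnitz expansion pointwise, the derivation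
is the corresponding sum. -/
theorem e_eq_sum {α : Type} (Sb : LSub (Derivation k R R)) (l : List α) (a : α → R)
    (Sq : α → LSub (Derivation k R R))
    (h : ∀ x : R, St.act [Sb] x = (l.map fun q => a q * St.act [Sq q] x).sum) :
    St.e Sb = (l.map fun q => a q • St.e (Sq q)).sum := by
  ext x
  have h' := h x
  rw [St.e_spec Sb x] at h'
  rw [h', listsum_deriv_apply l (fun q => a q • St.e (Sq q)) x]
  refine congrArg _ (List.map_congr_left fun q _ => ?_)
  rw [Derivation.smul_apply, smul_eq_mul, ← St.e_spec (Sq q) x]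

end Setup

end CAL

namespace CAL

namespace Setup

variable {k R : Type} [CommRing k] [CommRing R] [Algebra k R] (St : Setup k R)

/-- Attachment sums when the marked node travels **with** the attached subtree `Sb`. -/
theorem attcarry (r s : R) (E : Derivation k R R) (Sb : LSub (Derivation k R R))
    (pS : List Nat) (Ti : List (LSub (Derivation k R R)))
    (hS : subAtS Sb pS = some (.mk (r • E) Ti))
    (N0 M0 Wmin : Nat)
    (HLB : ∀ (X : LTree (Derivation k R R)) (i' : Nat) (p' : List Nat)
      (Ti' : List (LSub (Derivation k R R))),
      sizeL X = N0 → X.length = M0 → Wmin ≤ WL X →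
      subAtL X i' p' = some (.mk (r • E) Ti') →
      St.act X s = ((splits Ti').map fun q =>
        St.act q.1 r * St.act (replaceAtL E q.2 X i' p') s).sum) :
    ∀ (n : Nat) (ts : LTree (Derivation k R R)), sizeL ts ≤ n → ∀ (K : Ctx (Derivation k R R)),
      (∀ u ∈ attL Sb ts, sizeL (fill K u) = N0 ∧ (fill K u).length = M0
        ∧ Wmin ≤ WL (fill K u)) →
      ((attL Sb ts).map fun u => St.act (fill K u) s).sum
        = ((splits Ti).map fun q => St.act q.1 r *
            ((attL (replaceAtS E q.2 Sb pS) ts).map fun u' => St.act (fill K u') s).sum).sum := by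
  intro n
  induction n with
  | zero =>
    intro ts hts K hN
    cases ts with
    | nil => simp [attL, sum_map_zero]
    | cons t ts' => exact absurd hts (by have := sizeS_pos t; simp; omega)
  | succ n ih =>
    intro ts hts K hN
    cases ts with
    | nil => simp [attL, sum_map_zero]
    | cons t ts' =>
      obtain ⟨d, cs⟩ := t
      have hszcs : sizeL cs ≤ n := by have := hts; simp at this; omega
      have hszts' : sizeL ts' ≤ n := by have := hts; simp at this; omega
      -- memberships
      have memhead : (LSub.mk d (Sb :: cs)) :: ts' ∈ attL Sb (LSub.mk d cs :: ts') := by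
        rw [attL]
        refine List.mem_append_left _ (List.mem_map.mpr ⟨_, ?_, rfl⟩)
        rw [attS]; exact List.mem_cons_self
      have memmid : ∀ u ∈ attL Sb cs,
          (LSub.mk d u) :: ts' ∈ attL Sb (LSub.mk d cs :: ts') := by
        intro u hu
        rw [attL]
        refine List.mem_append_left _ (List.mem_map.mpr ⟨_, ?_, rfl⟩)
        rw [attS]
        exact List.mem_cons_of_mem _ (List.mem_map.mpr ⟨u, hu, rfl⟩)
      have memlast : ∀ u ∈ attL Sb ts',
          (LSub.mk d cs) :: u ∈ attL Sb (LSub.mk d cs :: ts') := by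
        intro u hu
        rw [attL]
        exact List.mem_append_right _ (List.mem_map.mpr ⟨u, hu, rfl⟩)
      -- Term 1 : attachment at the root of t
      have hterm1 : St.act (fill K ((LSub.mk d (Sb :: cs)) :: ts')) s
          = ((splits Ti).map fun q => St.act q.1 r *
              St.act (fill K ((LSub.mk d (replaceAtS E q.2 Sb pS :: cs)) :: ts')) s).sum := by
        obtain ⟨hsz, hlen, hW⟩ := hN _ memhead
        have hsub : subAtL (fill K ((LSub.mk d (Sb :: cs)) :: ts'))
            (posC K (0, 0 :: pS)).1 (posC K (0, 0 :: pS)).2 = some (.mk (r • E) Ti) := by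
          rw [subAt_fill, subAtL_cons_zero, subAtS_cons, subAtL_cons_zero]
          exact hS
        have h := HLB _ _ _ _ hsz hlen hW hsub
        rw [h]
        refine congrArg _ (List.map_congr_left fun q _ => ?_)
        rw [replace_fill, replaceAtL_cons_zero, replaceAtS_cons, replaceAtL_cons_zero]
      -- Term 2 : attachments inside cs
      have hterm2 : ((attL Sb cs).map fun u => St.act (fill K ((LSub.mk d u) :: ts')) s).sum
          = ((splits Ti).map fun q => St.act q.1 r *
              ((attL (replaceAtS E q.2 Sb pS) cs).map fun u' =>
                St.act (fill K ((LSub.mk d u') :: ts')) s).sum).sum := by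
        have := ih cs hszcs (Frame.deeper [] d ts' :: K) (fun u hu => hN _ (memmid u hu))
        exact this
      -- Term 3 : attachments inside ts'
      have hterm3 : ((attL Sb ts').map fun u => St.act (fill K ((LSub.mk d cs) :: u)) s).sum
          = ((splits Ti).map fun q => St.act q.1 r *
              ((attL (replaceAtS E q.2 Sb pS) ts').map fun u' =>
                St.act (fill K ((LSub.mk d cs) :: u')) s).sum).sum := by
        have := ih ts' hszts' (Frame.shift [LSub.mk d cs] :: K) (fun u hu => hN _ (memlast u hu))
        exact this
      -- assemble
      rw [attL, attS]
      simp only [List.map_append, List.map_cons, List.map_map, List.sum_append, List.sum_cons,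
        Function.comp_def]
      rw [hterm1, hterm2, hterm3]
      rw [← sum_map_add, ← sum_map_add]
      refine congrArg _ (List.map_congr_left fun q _ => ?_)
      rw [attL, attS]
      simp only [List.map_append, List.map_cons, List.map_map, List.sum_append, List.sum_cons,
        Function.comp_def]
      ring

end Setup

end CAL

namespace CAL

namespace Setup

variable {k R : Type} [CommRing k] [CommRing R] [Algebra k R] (St : Setup k R)

/-- Attachment sums when the marked node stays in the host forest `L`. -/
theorem attsum (r s : R) (E : Derivation k R R) (cS : LSub (Derivation k R R))
    (N0 M0 Wmin : Nat)
    (HLB : ∀ (X : LTree (Derivation k R R)) (i' : Nat) (p' : List Nat)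
      (Ti' : List (LSub (Derivation k R R))),
      sizeL X = N0 → X.length = M0 → Wmin ≤ WL X →
      subAtL X i' p' = some (.mk (r • E) Ti') →
      St.act X s = ((splits Ti').map fun q =>
        St.act q.1 r * St.act (replaceAtL E q.2 X i' p') s).sum) :
    ∀ (n : Nat) (L : LTree (Derivation k R R)), sizeL L ≤ n →
      ∀ (K : Ctx (Derivation k R R)) (i : Nat) (p : List Nat)
        (Ti : List (LSub (Derivation k R R))),
      subAtL L i p = some (.mk (r • E) Ti) →
      (∀ u ∈ attL cS L, sizeL (fill K u) = N0 ∧ (fill K u).length = M0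
        ∧ Wmin ≤ WL (fill K u)) →
      ((attL cS L).map fun u => St.act (fill K u) s).sum
        = ((splits Ti).map fun q =>
            (St.e cS) (St.act q.1 r) * St.act (fill K (replaceAtL E q.2 L i p)) s
            + St.act q.1 r *
              ((attL cS (replaceAtL E q.2 L i p)).map fun u' =>
                St.act (fill K u') s).sum).sum := by
  intro n
  induction n with
  | zero =>
    intro L hL K i p Ti hsub hN
    cases L with
    | nil => rw [subAtL_nil] at hsub; exact absurd hsub (by simp)
    | cons t L' => exact absurd hL (by have := sizeS_pos t; simp; omega)
  | succ n ih =>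
    intro L hL K i p Ti hsub hN
    cases L with
    | nil => rw [subAtL_nil] at hsub; exact absurd hsub (by simp)
    | cons t L' =>
      obtain ⟨d0, cs0⟩ := t
      have hszcs : sizeL cs0 ≤ n := by have := hL; simp at this; omega
      have hszL' : sizeL L' ≤ n := by have := hL; simp at this; omega
      -- memberships
      have memhead : (LSub.mk d0 (cS :: cs0)) :: L' ∈ attL cS (LSub.mk d0 cs0 :: L') := by
        rw [attL]
        refine List.mem_append_left _ (List.mem_map.mpr ⟨_, ?_, rfl⟩)
        rw [attS]; exact List.mem_cons_self
      have memmid : ∀ u ∈ attL cS cs0,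
          (LSub.mk d0 u) :: L' ∈ attL cS (LSub.mk d0 cs0 :: L') := by
        intro u hu
        rw [attL]
        refine List.mem_append_left _ (List.mem_map.mpr ⟨_, ?_, rfl⟩)
        rw [attS]
        exact List.mem_cons_of_mem _ (List.mem_map.mpr ⟨u, hu, rfl⟩)
      have memlast : ∀ u ∈ attL cS L',
          (LSub.mk d0 cs0) :: u ∈ attL cS (LSub.mk d0 cs0 :: L') := by
        intro u hu
        rw [attL]
        exact List.mem_append_right _ (List.mem_map.mpr ⟨u, hu, rfl⟩)
      match i, p with
      | i'' + 1, p =>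
        -- node strictly inside L'
        rw [subAtL_cons_succ] at hsub
        -- part 1 : attachments inside t
        have hpart1 : ∀ t'' ∈ attS cS (LSub.mk d0 cs0),
            St.act (fill K (t'' :: L')) s
              = ((splits Ti).map fun q => St.act q.1 r *
                  St.act (fill K (t'' :: replaceAtL E q.2 L' i'' p)) s).sum := by
          intro t'' ht''
          have hmem : t'' :: L' ∈ attL cS (LSub.mk d0 cs0 :: L') := by
            rw [attL]
            exact List.mem_append_left _ (List.mem_map.mpr ⟨t'', ht'', rfl⟩)
          obtain ⟨hsz, hlen, hW⟩ := hN _ hmem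
          have hsub' : subAtL (fill K (t'' :: L')) (posC K (i'' + 1, p)).1
              (posC K (i'' + 1, p)).2 = some (.mk (r • E) Ti) := by
            rw [subAt_fill, subAtL_cons_succ]
            exact hsub
          have h := HLB _ _ _ _ hsz hlen hW hsub'
          rw [h]
          refine congrArg _ (List.map_congr_left fun q _ => ?_)
          rw [replace_fill, replaceAtL_cons_succ]
        -- part 2 : attachments inside L'
        have hpart2 := ih L' hszL' (Frame.shift [LSub.mk d0 cs0] :: K) i'' p Ti hsub
          (fun u hu => hN _ (memlast u hu))
        simp only [fill, fillF, List.singleton_append] at hpart2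
        -- assemble
        rw [attL]
        simp only [List.map_append, List.map_map, List.sum_append, Function.comp_def]
        have hP1 : ((attS cS (LSub.mk d0 cs0)).map fun t'' => St.act (fill K (t'' :: L')) s).sum
            = ((splits Ti).map fun q => St.act q.1 r *
                ((attS cS (LSub.mk d0 cs0)).map fun t'' =>
                  St.act (fill K (t'' :: replaceAtL E q.2 L' i'' p)) s).sum).sum := by
          rw [List.map_congr_left hpart1, sum_map_swap]
          refine congrArg _ (List.map_congr_left fun q _ => ?_)
          rw [← sum_map_mul_left]
        rw [hP1, hpart2, ← sum_map_add]
        refine congrArg _ (List.map_congr_left fun q _ => ?_)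
        rw [replaceAtL_cons_succ, attL]
        simp only [List.map_append, List.map_map, List.sum_append, Function.comp_def]
        ring
      | 0, [] =>
        -- the node is the root of t
        rw [subAtL_cons_zero, subAtS_nil, Option.some.injEq] at hsub
        obtain ⟨hd0, hcs0⟩ : d0 = r • E ∧ cs0 = Ti := by
          constructor <;> [exact congrArg (fun x => match x with | LSub.mk d _ => d) hsub;
            exact congrArg (fun x => match x with | LSub.mk _ c => c) hsub]
        subst hd0
        have hcs0' : Ti = cs0 := hcs0.symm
        subst hcs0'
        -- head attachment : at the node itself
        have hhead : St.act (fill K ((LSub.mk (r • E) (cS :: Ti)) :: L')) s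
            = ((splits Ti).map fun q => St.act (cS :: q.1) r *
                St.act (fill K ((LSub.mk E q.2) :: L')) s).sum
              + ((splits Ti).map fun q => St.act q.1 r *
                St.act (fill K ((LSub.mk E (cS :: q.2)) :: L')) s).sum := by
          obtain ⟨hsz, hlen, hW⟩ := hN _ memhead
          have hsub' : subAtL (fill K ((LSub.mk (r • E) (cS :: Ti)) :: L'))
              (posC K (0, [])).1 (posC K (0, [])).2 = some (.mk (r • E) (cS :: Ti)) := by
            rw [subAt_fill, subAtL_cons_zero, subAtS_nil]
          have h := HLB _ _ _ _ hsz hlen hW hsub'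
          rw [h]
          have hrepl : ∀ q' : List (LSub (Derivation k R R)) × List (LSub (Derivation k R R)),
              replaceAtL E q'.2 (fill K ((LSub.mk (r • E) (cS :: Ti)) :: L'))
                (posC K (0, [])).1 (posC K (0, [])).2
              = fill K ((LSub.mk E q'.2) :: L') := by
            intro q'
            rw [replace_fill, replaceAtL_cons_zero, replaceAtS_nil]
          rw [List.map_congr_left (fun q' (_ : q' ∈ splits (cS :: Ti)) => by rw [hrepl q'])]
          exact sum_splits_cons cS Ti _
        -- middle attachments : inside Ti
        have hmid : ((attL cS Ti).map fun u => St.act (fill K ((LSub.mk (r • E) u) :: L')) s).sum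
            = ((splits Ti).map fun q =>
                ((attL cS q.1).map fun u1 => St.act u1 r *
                  St.act (fill K ((LSub.mk E q.2) :: L')) s).sum
                + ((attL cS q.2).map fun u2 => St.act q.1 r *
                  St.act (fill K ((LSub.mk E u2) :: L')) s).sum).sum := by
          have hper : ∀ u ∈ attL cS Ti,
              St.act (fill K ((LSub.mk (r • E) u) :: L')) s
                = ((splits u).map fun q' => St.act q'.1 r *
                    St.act (fill K ((LSub.mk E q'.2) :: L')) s).sum := by
            intro u hu
            obtain ⟨hsz, hlen, hW⟩ := hN _ (memmid u hu)
            have hsub' : subAtL (fill K ((LSub.mk (r • E) u) :: L'))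
                (posC K (0, [])).1 (posC K (0, [])).2 = some (.mk (r • E) u) := by
              rw [subAt_fill, subAtL_cons_zero, subAtS_nil]
            have h := HLB _ _ _ _ hsz hlen hW hsub'
            rw [h]
            refine congrArg _ (List.map_congr_left fun q' _ => ?_)
            rw [replace_fill, replaceAtL_cons_zero, replaceAtS_nil]
          rw [List.map_congr_left hper, attL_eq_varyOne,
            splits_vary (attS cS) (fun q' => St.act q'.1 r *
              St.act (fill K ((LSub.mk E q'.2) :: L')) s) Ti]
          refine congrArg _ (List.map_congr_left fun q _ => ?_)
          rw [← attL_eq_varyOne, ← attL_eq_varyOne]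
        -- last attachments : inside L'
        have hlast : ((attL cS L').map fun u =>
              St.act (fill K ((LSub.mk (r • E) Ti) :: u)) s).sum
            = ((splits Ti).map fun q => St.act q.1 r *
                ((attL cS L').map fun u =>
                  St.act (fill K ((LSub.mk E q.2) :: u)) s).sum).sum := by
          have hper : ∀ u ∈ attL cS L',
              St.act (fill K ((LSub.mk (r • E) Ti) :: u)) s
                = ((splits Ti).map fun q => St.act q.1 r *
                    St.act (fill K ((LSub.mk E q.2) :: u)) s).sum := by
            intro u hu
            obtain ⟨hsz, hlen, hW⟩ := hN _ (memlast u hu)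
            have hsub' : subAtL (fill K ((LSub.mk (r • E) Ti) :: u))
                (posC K (0, [])).1 (posC K (0, [])).2 = some (.mk (r • E) Ti) := by
              rw [subAt_fill, subAtL_cons_zero, subAtS_nil]
            have h := HLB _ _ _ _ hsz hlen hW hsub'
            rw [h]
            refine congrArg _ (List.map_congr_left fun q _ => ?_)
            rw [replace_fill, replaceAtL_cons_zero, replaceAtS_nil]
          rw [List.map_congr_left hper, sum_map_swap]
          refine congrArg _ (List.map_congr_left fun q _ => ?_)
          rw [← sum_map_mul_left]
        -- assemble
        rw [attL, attS]
        simp only [List.map_append, List.map_cons, List.map_map, List.sum_append, List.sum_cons,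
          Function.comp_def]
        rw [hhead, hmid, hlast]
        rw [← sum_map_add, ← sum_map_add, ← sum_map_add]
        refine congrArg _ (List.map_congr_left fun q _ => ?_)
        rw [replaceAtL_cons_zero, replaceAtS_nil, attL, attS]
        simp only [List.map_append, List.map_cons, List.map_map, List.sum_append, List.sum_cons,
          Function.comp_def]
        -- express (e cS) (act q.1 r) via peel
        have hpeel := St.peel cS q.1 r
        rw [← hpeel]
        have : ((attL cS q.1).map fun u1 => St.act u1 r *
            St.act (fill K ((LSub.mk E q.2) :: L')) s).sum
            = ((attL cS q.1).map fun u1 => St.act u1 r).sum *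
              St.act (fill K ((LSub.mk E q.2) :: L')) s := by
          rw [mul_comm, ← sum_map_mul_left]
          refine congrArg _ (List.map_congr_left fun u1 _ => by ring)
        rw [this, sum_map_mul_left]
        ring
      | 0, j :: p'' =>
        -- node strictly inside cs0
        rw [subAtL_cons_zero, subAtS_cons] at hsub
        -- head attachment : at the root of t (outside the node)
        have hhead : St.act (fill K ((LSub.mk d0 (cS :: cs0)) :: L')) s
            = ((splits Ti).map fun q => St.act q.1 r *
                St.act (fill K ((LSub.mk d0 (cS :: replaceAtL E q.2 cs0 j p'')) :: L')) s).sum := by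
          obtain ⟨hsz, hlen, hW⟩ := hN _ memhead
          have hsub' : subAtL (fill K ((LSub.mk d0 (cS :: cs0)) :: L'))
              (posC K (0, (j+1) :: p'')).1 (posC K (0, (j+1) :: p'')).2
              = some (.mk (r • E) Ti) := by
            rw [subAt_fill, subAtL_cons_zero, subAtS_cons, subAtL_cons_succ]
            exact hsub
          have h := HLB _ _ _ _ hsz hlen hW hsub'
          rw [h]
          refine congrArg _ (List.map_congr_left fun q _ => ?_)
          rw [replace_fill, replaceAtL_cons_zero, replaceAtS_cons, replaceAtL_cons_succ]
        -- middle : attachments inside cs0 (recursion)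
        have hmid := ih cs0 hszcs (Frame.deeper [] d0 L' :: K) j p'' Ti hsub
          (fun u hu => hN _ (memmid u hu))
        simp only [fill, fillF, List.nil_append] at hmid
        -- last : attachments inside L'
        have hlast : ((attL cS L').map fun u =>
              St.act (fill K ((LSub.mk d0 cs0) :: u)) s).sum
            = ((splits Ti).map fun q => St.act q.1 r *
                ((attL cS L').map fun u =>
                  St.act (fill K ((LSub.mk d0 (replaceAtL E q.2 cs0 j p'')) :: u)) s).sum).sum := by
          have hper : ∀ u ∈ attL cS L',
              St.act (fill K ((LSub.mk d0 cs0) :: u)) s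
                = ((splits Ti).map fun q => St.act q.1 r *
                    St.act (fill K ((LSub.mk d0 (replaceAtL E q.2 cs0 j p'')) :: u)) s).sum := by
            intro u hu
            obtain ⟨hsz, hlen, hW⟩ := hN _ (memlast u hu)
            have hsub' : subAtL (fill K ((LSub.mk d0 cs0) :: u))
                (posC K (0, j :: p'')).1 (posC K (0, j :: p'')).2 = some (.mk (r • E) Ti) := by
              rw [subAt_fill, subAtL_cons_zero, subAtS_cons]
              exact hsub
            have h := HLB _ _ _ _ hsz hlen hW hsub'
            rw [h]
            refine congrArg _ (List.map_congr_left fun q _ => ?_)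
            rw [replace_fill, replaceAtL_cons_zero, replaceAtS_cons]
          rw [List.map_congr_left hper, sum_map_swap]
          refine congrArg _ (List.map_congr_left fun q _ => ?_)
          rw [← sum_map_mul_left]
        -- assemble
        rw [attL, attS]
        simp only [List.map_append, List.map_cons, List.map_map, List.sum_append, List.sum_cons,
          Function.comp_def]
        rw [hhead, hmid, hlast]
        rw [← sum_map_add, ← sum_map_add]
        refine congrArg _ (List.map_congr_left fun q _ => ?_)
        rw [replaceAtL_cons_zero, replaceAtS_cons, attL, attS]
        simp only [List.map_append, List.map_cons, List.map_map, List.sum_append, List.sum_cons,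
          Function.comp_def]
        ring

end Setup

end CAL

namespace CAL

theorem sum_map_sub {α M : Type*} [AddCommGroup M] (l : List α) (f g : α → M) :
    (l.map fun x => f x - g x).sum = (l.map f).sum - (l.map g).sum := by
  induction l with
  | nil => simp
  | cons x l ih => simp only [List.map_cons, List.sum_cons, ih]; abel

theorem sum_map_mul_right {α M : Type*} [NonUnitalNonAssocSemiring M] (l : List α) (f : α → M)
    (a : M) : (l.map fun x => f x * a).sum = (l.map f).sum * a := by
  induction l <;> simp_all [add_mul]

namespace Setup

variable {k R : Type} [CommRing k] [CommRing R] [Algebra k R] (St : Setup k R)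

theorem deriv_apply_sum_mul {α : Type} (Dd : Derivation k R R) (l : List α) (a b : α → R) :
    Dd ((l.map fun q => a q * b q).sum)
      = (l.map fun q => Dd (a q) * b q + a q * Dd (b q)).sum := by
  induction l with
  | nil => simp
  | cons q l ih =>
    simp only [List.map_cons, List.sum_cons]
    rw [map_add, Derivation.leibniz, ih]
    simp only [smul_eq_mul]
    ring

/-- The main induction: the Leibnitz property for all trees. -/
theorem grand :
    ∀ (n m w : Nat) (T : LTree (Derivation k R R)) (i : Nat) (p : List Nat) (r : R)
      (E : Derivation k R R) (Ti : List (LSub (Derivation k R R))),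
      sizeL T = n → T.length = m → n * n - WL T = w →
      subAtL T i p = some (.mk (r • E) Ti) → ∀ s : R,
      St.act T s
        = ((splits Ti).map fun q => St.act q.1 r * St.act (replaceAtL E q.2 T i p) s).sum := by
  intro n
  induction n using Nat.strong_induction_on with | _ n ihn => ?_
  intro m
  induction m using Nat.strong_induction_on with | _ m ihm => ?_
  intro w
  induction w using Nat.strong_induction_on with | _ w ihw => ?_
  intro T i p r E Ti hn hm hw hsub s
  cases T with
  | nil => rw [subAtL_nil] at hsub; exact absurd hsub (by simp)
  | cons t ts =>
    match i, p with
    | i'' + 1, p =>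
      rw [subAtL_cons_succ] at hsub
      have hsz : sizeS t + sizeL ts = n := by rw [← hn]; simp
      have hnts : sizeL ts < n := by have := sizeS_pos t; omega
      have hts := ihn (sizeL ts) hnts ts.length (sizeL ts * sizeL ts - WL ts) ts i'' p r E Ti
        rfl rfl rfl hsub s
      have hpeel := St.peel t ts s
      have hder1 : (St.e t) (St.act ts s)
          = ((splits Ti).map fun q =>
              (St.e t) (St.act q.1 r) * St.act (replaceAtL E q.2 ts i'' p) s
              + St.act q.1 r * (St.e t) (St.act (replaceAtL E q.2 ts i'' p) s)).sum := by
        rw [hts]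
        exact deriv_apply_sum_mul (St.e t) (splits Ti) _ _
      have hmlen : ts.length < m := by rw [← hm]; simp
      have HLB : ∀ (X : LTree (Derivation k R R)) (i' : Nat) (p' : List Nat)
          (Ti' : List (LSub (Derivation k R R))),
          sizeL X = n → X.length = ts.length → (0:Nat) ≤ WL X →
          subAtL X i' p' = some (.mk (r • E) Ti') →
          St.act X s = ((splits Ti').map fun q =>
            St.act q.1 r * St.act (replaceAtL E q.2 X i' p') s).sum := by
        intro X i' p' Ti' hsz' hlen' _ hsub'
        exact ihm ts.length hmlen (n * n - WL X) X i' p' r E Ti' hsz' hlen' rfl hsub' s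
      have hN : ∀ u ∈ attL t ts, sizeL (fill ([] : Ctx (Derivation k R R)) u) = n
          ∧ (fill ([] : Ctx (Derivation k R R)) u).length = ts.length
          ∧ (0:Nat) ≤ WL (fill ([] : Ctx (Derivation k R R)) u) := by
        intro u hu
        refine ⟨?_, ?_, by omega⟩
        · show sizeL u = n
          rw [attL_size t ts u hu]; omega
        · show u.length = ts.length
          exact attL_length_eq t ts u hu
      have hatt := St.attsum r s E t n ts.length 0 HLB (sizeL ts) ts le_rfl [] i'' p Ti hsub hN
      simp only [fill] at hatt
      simp only [replaceAtL_cons_succ]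
      rw [eq_sub_of_add_eq hpeel, hder1, hatt, ← sum_map_sub]
      refine congrArg _ (List.map_congr_left fun q _ => ?_)
      have hp := St.peel t (replaceAtL E q.2 ts i'' p) s
      linear_combination (-(St.act q.1 r)) * hp
    | 0, p =>
      cases ts with
      | cons t2 ts2 =>
        rw [subAtL_cons_zero] at hsub
        have hsz : sizeS t + sizeL (t2 :: ts2) = n := by rw [← hn]; simp
        have hszS : sizeS t < n := by
          have h1 := sizeS_pos t2
          have h2 : sizeL (t2 :: ts2) = sizeS t2 + sizeL ts2 := by simp
          omega
        have hsub0 : subAtL [t] 0 p = some (.mk (r • E) Ti) := by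
          rw [subAtL_cons_zero]; exact hsub
        have hLS : ∀ x : R, St.act [t] x = ((splits Ti).map fun q =>
            St.act q.1 r * St.act [replaceAtS E q.2 t p] x).sum := by
          intro x
          have h := ihn (sizeL [t]) (by simpa using hszS) ([t] : LTree (Derivation k R R)).length
            (sizeL [t] * sizeL [t] - WL [t]) [t] 0 p r E Ti rfl rfl rfl hsub0 x
          rw [h]
          refine congrArg _ (List.map_congr_left fun q _ => ?_)
          rw [replaceAtL_cons_zero]
        have heS := St.e_eq_sum t (splits Ti) (fun q => St.act q.1 r)
          (fun q => replaceAtS E q.2 t p) hLS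
        have hpeel := St.peel t (t2 :: ts2) s
        have hev : (St.e t) (St.act (t2 :: ts2) s) = ((splits Ti).map fun q =>
            St.act q.1 r * (St.e (replaceAtS E q.2 t p)) (St.act (t2 :: ts2) s)).sum := by
          rw [heS, listsum_deriv_apply]
          refine congrArg _ (List.map_congr_left fun q _ => ?_)
          rw [Derivation.smul_apply, smul_eq_mul]
        have hmlen : (t2 :: ts2).length < m := by rw [← hm]; simp
        have HLB : ∀ (X : LTree (Derivation k R R)) (i' : Nat) (p' : List Nat)
            (Ti' : List (LSub (Derivation k R R))),
            sizeL X = n → X.length = (t2 :: ts2).length → (0:Nat) ≤ WL X →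
            subAtL X i' p' = some (.mk (r • E) Ti') →
            St.act X s = ((splits Ti').map fun q =>
              St.act q.1 r * St.act (replaceAtL E q.2 X i' p') s).sum := by
          intro X i' p' Ti' hsz' hlen' _ hsub'
          exact ihm (t2 :: ts2).length hmlen (n * n - WL X) X i' p' r E Ti' hsz' hlen' rfl hsub' s
        have hN : ∀ u ∈ attL t (t2 :: ts2),
            sizeL (fill ([] : Ctx (Derivation k R R)) u) = n
            ∧ (fill ([] : Ctx (Derivation k R R)) u).length = (t2 :: ts2).length
            ∧ (0:Nat) ≤ WL (fill ([] : Ctx (Derivation k R R)) u) := by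
          intro u hu
          refine ⟨?_, ?_, by omega⟩
          · show sizeL u = n
            rw [attL_size t (t2 :: ts2) u hu]; omega
          · show u.length = (t2 :: ts2).length
            exact attL_length_eq t (t2 :: ts2) u hu
        have hcarry := St.attcarry r s E t p Ti hsub n (t2 :: ts2).length 0 HLB
          (sizeL (t2 :: ts2)) (t2 :: ts2) le_rfl [] hN
        simp only [fill] at hcarry
        simp only [replaceAtL_cons_zero]
        rw [eq_sub_of_add_eq hpeel, hev, hcarry, ← sum_map_sub]
        refine congrArg _ (List.map_congr_left fun q _ => ?_)
        have hp := St.peel (replaceAtS E q.2 t p) (t2 :: ts2) s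
        have he' := St.e_spec (replaceAtS E q.2 t p)
        linear_combination (-(St.act q.1 r)) * hp
      | nil =>
        obtain ⟨d0, cs0⟩ := t
        match p with
        | [] =>
          rw [subAtL_cons_zero, subAtS_nil, Option.some.injEq] at hsub
          obtain ⟨hd0, hcs0⟩ : d0 = r • E ∧ cs0 = Ti := by
            constructor <;> [exact congrArg (fun x => match x with | LSub.mk d _ => d) hsub;
              exact congrArg (fun x => match x with | LSub.mk _ c => c) hsub]
          subst hd0
          have hcs0' : Ti = cs0 := hcs0.symm
          subst hcs0'
          simp only [replaceAtL_cons_zero, replaceAtS_nil]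
          cases Ti with
          | nil =>
            show St.act [LSub.mk (r • E) []] s = _
            rw [splits_nil, St.act_leaf (r • E) s]
            simp only [List.map_cons, List.map_nil, List.sum_cons, List.sum_nil, add_zero]
            rw [St.hact.1 r, St.act_leaf E s]
            rw [Derivation.smul_apply, smul_eq_mul]
          | cons cH cL =>
            have hkey := St.key (r • E) cH cL s
            have hsz : 1 + (sizeS cH + sizeL cL) = n := by rw [← hn]; simp
            have hsubG : subAtL [LSub.mk (r • E) cL] 0 [] = some (.mk (r • E) cL) := by
              rw [subAtL_cons_zero, subAtS_nil]
            have hG : ∀ x : R, St.act [LSub.mk (r • E) cL] x = ((splits cL).map fun q =>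
                St.act q.1 r * St.act [LSub.mk E q.2] x).sum := by
              intro x
              have hlt : sizeL [LSub.mk (r • E) cL] < n := by
                have := sizeS_pos cH; simp; omega
              have h := ihn (sizeL [LSub.mk (r • E) cL]) hlt 1
                (sizeL [LSub.mk (r • E) cL] * sizeL [LSub.mk (r • E) cL]
                  - WL [LSub.mk (r • E) cL])
                [LSub.mk (r • E) cL] 0 [] r E cL rfl rfl rfl hsubG x
              rw [h]
              refine congrArg _ (List.map_congr_left fun q _ => ?_)
              rw [replaceAtL_cons_zero, replaceAtS_nil]
            have heG := St.e_eq_sum (LSub.mk (r • E) cL) (splits cL) (fun q => St.act q.1 r)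
              (fun q => LSub.mk E q.2) hG
            have hco : (St.co (St.e cH) (St.e (LSub.mk (r • E) cL))) s
                = ((splits cL).map fun q =>
                    St.act q.1 r * (St.co (St.e cH) (St.e (LSub.mk E q.2))) s
                    + (St.e cH) (St.act q.1 r) * (St.e (LSub.mk E q.2)) s).sum := by
              rw [heG]
              exact St.co_right_sum (St.e cH) (splits cL) _ _ s
            have hattper : ∀ u ∈ attL cH cL, St.act [LSub.mk (r • E) u] s
                = ((splits u).map fun q' =>
                    St.act q'.1 r * St.act [LSub.mk E q'.2] s).sum := by
              intro u hu
              have hWu := attL_W cH cL u hu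
              have hSu := attL_size cH cL u hu
              have hsizeX : sizeL [LSub.mk (r • E) u] = n := by simp; omega
              have hXsq := WL_le_sq [LSub.mk (r • E) u]
              rw [hsizeX] at hXsq
              have hwlt : n * n - WL [LSub.mk (r • E) u] < w := by
                rw [← hw]
                have h1 : WL ([LSub.mk (r • E) (cH :: cL)] : LTree (Derivation k R R))
                    = 1 + (WS cH + WL cL) + (sizeS cH + sizeL cL) := by simp
                have h2 : WL ([LSub.mk (r • E) u] : LTree (Derivation k R R))
                    = 1 + WL u + sizeL u := by simp
                have h3 := sizeS_pos cH
                omega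
              have hsub' : subAtL [LSub.mk (r • E) u] 0 [] = some (.mk (r • E) u) := by
                rw [subAtL_cons_zero, subAtS_nil]
              have h := ihw (n * n - WL [LSub.mk (r • E) u]) hwlt
                [LSub.mk (r • E) u] 0 [] r E u hsizeX (by rw [← hm]; rfl) rfl hsub' s
              rw [h]
              refine congrArg _ (List.map_congr_left fun q' _ => ?_)
              rw [replaceAtL_cons_zero, replaceAtS_nil]
            have hvary : ((attL cH cL).map fun u => St.act [LSub.mk (r • E) u] s).sum
                = ((splits cL).map fun q =>
                    ((attL cH q.1).map fun u1 => St.act u1 r).sum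
                        * St.act [LSub.mk E q.2] s
                    + St.act q.1 r
                        * ((attL cH q.2).map fun u2 => St.act [LSub.mk E u2] s).sum).sum := by
              rw [List.map_congr_left hattper, attL_eq_varyOne,
                splits_vary (attS cH)
                  (fun q' => St.act q'.1 r * St.act [LSub.mk E q'.2] s) cL]
              refine congrArg _ (List.map_congr_left fun q _ => ?_)
              rw [← attL_eq_varyOne, ← attL_eq_varyOne]
              dsimp only
              rw [sum_map_mul_right, sum_map_mul_left]
            rw [eq_sub_of_add_eq hkey, hco, hvary,
              sum_splits_cons cH cL
                (fun q => St.act q.1 r * St.act [LSub.mk E q.2] s),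
              ← sum_map_sub, ← sum_map_add]
            refine congrArg _ (List.map_congr_left fun q _ => ?_)
            have h5 := St.peel cH q.1 r
            have h6 := St.key E cH q.2 s
            have hb := St.e_spec (LSub.mk E q.2) s
            have h6' : St.act [LSub.mk E (cH :: q.2)] s
                + ((attL cH q.2).map fun u2 => St.act [LSub.mk E u2] s).sum
                = (St.co (St.e cH) (St.e (LSub.mk E q.2))) s := h6
            linear_combination (-(St.act q.1 r)) * h6' + (-(St.act [LSub.mk E q.2] s)) * h5
              + (-((St.e cH) (St.act q.1 r))) * hb
        | (jj + 1) :: p'' =>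
          rw [subAtL_cons_zero, subAtS_cons] at hsub
          cases cs0 with
          | nil => rw [subAtL_nil] at hsub; exact absurd hsub (by simp)
          | cons cH cL =>
            rw [subAtL_cons_succ] at hsub
            have hkey := St.key d0 cH cL s
            have hsz : 1 + (sizeS cH + sizeL cL) = n := by rw [← hn]; simp
            have hm1 : m = 1 := by rw [← hm]; rfl
            have hsubG : subAtL [LSub.mk d0 cL] 0 (jj :: p'') = some (.mk (r • E) Ti) := by
              rw [subAtL_cons_zero, subAtS_cons]; exact hsub
            have hG : ∀ x : R, St.act [LSub.mk d0 cL] x = ((splits Ti).map fun q =>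
                St.act q.1 r * St.act [LSub.mk d0 (replaceAtL E q.2 cL jj p'')] x).sum := by
              intro x
              have hlt : sizeL [LSub.mk d0 cL] < n := by
                have := sizeS_pos cH; simp; omega
              have h := ihn (sizeL [LSub.mk d0 cL]) hlt 1
                (sizeL [LSub.mk d0 cL] * sizeL [LSub.mk d0 cL] - WL [LSub.mk d0 cL])
                [LSub.mk d0 cL] 0 (jj :: p'') r E Ti rfl rfl rfl hsubG x
              rw [h]
              refine congrArg _ (List.map_congr_left fun q _ => ?_)
              rw [replaceAtL_cons_zero, replaceAtS_cons]
            have heG := St.e_eq_sum (LSub.mk d0 cL) (splits Ti) (fun q => St.act q.1 r)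
              (fun q => LSub.mk d0 (replaceAtL E q.2 cL jj p'')) hG
            have hco : (St.co (St.e cH) (St.e (LSub.mk d0 cL))) s
                = ((splits Ti).map fun q =>
                    St.act q.1 r
                      * (St.co (St.e cH) (St.e (LSub.mk d0 (replaceAtL E q.2 cL jj p'')))) s
                    + (St.e cH) (St.act q.1 r)
                      * (St.e (LSub.mk d0 (replaceAtL E q.2 cL jj p''))) s).sum := by
              rw [heG]
              exact St.co_right_sum (St.e cH) (splits Ti) _ _ s
            have HLB : ∀ (X : LTree (Derivation k R R)) (i' : Nat) (p' : List Nat)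
                (Ti' : List (LSub (Derivation k R R))),
                sizeL X = n → X.length = m → WL ([LSub.mk d0 (cH :: cL)] :
                    LTree (Derivation k R R)) + 1 ≤ WL X →
                subAtL X i' p' = some (.mk (r • E) Ti') →
                St.act X s = ((splits Ti').map fun q =>
                  St.act q.1 r * St.act (replaceAtL E q.2 X i' p') s).sum := by
              intro X i' p' Ti' hsz' hlen' hW' hsub'
              have hXsq := WL_le_sq X
              rw [hsz'] at hXsq
              have hwlt : n * n - WL X < w := by rw [← hw]; omega
              exact ihw (n * n - WL X) hwlt X i' p' r E Ti' hsz' hlen' rfl hsub' s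
            have hN : ∀ u ∈ attL cH cL,
                sizeL (fill ([Frame.deeper [] d0 []] : Ctx (Derivation k R R)) u) = n
                ∧ (fill ([Frame.deeper [] d0 []] : Ctx (Derivation k R R)) u).length = m
                ∧ WL ([LSub.mk d0 (cH :: cL)] : LTree (Derivation k R R)) + 1
                    ≤ WL (fill ([Frame.deeper [] d0 []] : Ctx (Derivation k R R)) u) := by
              intro u hu
              have hWu := attL_W cH cL u hu
              have hSu := attL_size cH cL u hu
              have h1 := sizeS_pos cH
              refine ⟨?_, ?_, ?_⟩
              · show sizeL [LSub.mk d0 u] = n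
                simp; omega
              · show ([LSub.mk d0 u] : LTree (Derivation k R R)).length = m
                rw [hm1]
                rfl
              · show WL ([LSub.mk d0 (cH :: cL)] : LTree (Derivation k R R)) + 1
                    ≤ WL [LSub.mk d0 u]
                simp only [WL_cons, WL_nil, WS_mk, sizeL_cons]
                omega
            have hatt := St.attsum r s E cH n m
              (WL ([LSub.mk d0 (cH :: cL)] : LTree (Derivation k R R)) + 1) HLB
              (sizeL cL) cL le_rfl [Frame.deeper [] d0 []] jj p'' Ti hsub hN
            simp only [fill, fillF, List.nil_append] at hatt
            simp only [replaceAtL_cons_zero, replaceAtS_cons, replaceAtL_cons_succ]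
            rw [eq_sub_of_add_eq hkey, hco, hatt, ← sum_map_sub]
            refine congrArg _ (List.map_congr_left fun q _ => ?_)
            have h6 := St.key d0 cH (replaceAtL E q.2 cL jj p'') s
            have hb := St.e_spec (LSub.mk d0 (replaceAtL E q.2 cL jj p'')) s
            linear_combination (-(St.act q.1 r)) * h6
              + (-((St.e cH) (St.act q.1 r))) * hb
        | 0 :: p'' =>
          rw [subAtL_cons_zero, subAtS_cons] at hsub
          cases cs0 with
          | nil => rw [subAtL_nil] at hsub; exact absurd hsub (by simp)
          | cons cH cL =>
            rw [subAtL_cons_zero] at hsub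
            -- hsub : subAtS cH p'' = some node
            have hsub0 : subAtL [cH] 0 p'' = some (.mk (r • E) Ti) := by
              rw [subAtL_cons_zero]; exact hsub
            have hLH : ∀ x : R, St.act [cH] x = ((splits Ti).map fun q =>
                St.act q.1 r * St.act [replaceAtS E q.2 cH p''] x).sum := by
              intro x
              have hlt : sizeL [cH] < n := by rw [← hn]; simp; omega
              have h := ihn (sizeL [cH]) hlt 1 (sizeL [cH] * sizeL [cH] - WL [cH])
                [cH] 0 p'' r E Ti rfl rfl rfl hsub0 x
              rw [h]
              refine congrArg _ (List.map_congr_left fun q _ => ?_)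
              rw [replaceAtL_cons_zero]
            simp only [replaceAtL_cons_zero, replaceAtS_cons]
            cases cL with
            | nil =>
              -- T = [mk d0 [cH]] : direct connection computation
              have heH := St.e_eq_sum cH (splits Ti) (fun q => St.act q.1 r)
                (fun q => replaceAtS E q.2 cH p'') hLH
              rw [St.act_chain_collapse d0 cH s, heH, St.co_left_sum d0 (splits Ti)
                (fun q => St.act q.1 r) (fun q => St.e (replaceAtS E q.2 cH p'')) s]
              refine congrArg _ (List.map_congr_left fun q _ => ?_)
              rw [St.act_chain_collapse d0 (replaceAtS E q.2 cH p'') s]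
            | cons c2 cL2 =>
              have hkey' := St.key' d0 cH (c2 :: cL2) s
              have hsz : 1 + (sizeS cH + sizeL (c2 :: cL2)) = n := by rw [← hn]; simp
              have hm1 : m = 1 := by rw [← hm]; rfl
              have hszcl : 1 ≤ sizeL (c2 :: cL2) := by
                have := sizeS_pos c2; simp; omega
              -- Leibnitz for [mk G [cH]]
              have hsubGG : subAtL [LSub.mk (St.e (LSub.mk d0 (c2 :: cL2))) [cH]] 0 (0 :: p'')
                  = some (.mk (r • E) Ti) := by
                rw [subAtL_cons_zero, subAtS_cons, subAtL_cons_zero]; exact hsub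
              have hGG : St.act [LSub.mk (St.e (LSub.mk d0 (c2 :: cL2))) [cH]] s
                  = ((splits Ti).map fun q => St.act q.1 r *
                      St.act [LSub.mk (St.e (LSub.mk d0 (c2 :: cL2)))
                        [replaceAtS E q.2 cH p'']] s).sum := by
                have hlt : sizeL [LSub.mk (St.e (LSub.mk d0 (c2 :: cL2))) [cH]] < n := by
                  simp; omega
                have h := ihn (sizeL [LSub.mk (St.e (LSub.mk d0 (c2 :: cL2))) [cH]]) hlt 1
                  (sizeL [LSub.mk (St.e (LSub.mk d0 (c2 :: cL2))) [cH]]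
                    * sizeL [LSub.mk (St.e (LSub.mk d0 (c2 :: cL2))) [cH]]
                    - WL [LSub.mk (St.e (LSub.mk d0 (c2 :: cL2))) [cH]])
                  [LSub.mk (St.e (LSub.mk d0 (c2 :: cL2))) [cH]] 0 (0 :: p'') r E Ti
                  rfl rfl rfl hsubGG s
                rw [h]
                refine congrArg _ (List.map_congr_left fun q _ => ?_)
                rw [replaceAtL_cons_zero, replaceAtS_cons, replaceAtL_cons_zero]
              -- attachment transport
              have HLB : ∀ (X : LTree (Derivation k R R)) (i' : Nat) (p' : List Nat)
                  (Ti' : List (LSub (Derivation k R R))),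
                  sizeL X = n → X.length = m → WL ([LSub.mk d0 (cH :: c2 :: cL2)] :
                      LTree (Derivation k R R)) + 1 ≤ WL X →
                  subAtL X i' p' = some (.mk (r • E) Ti') →
                  St.act X s = ((splits Ti').map fun q =>
                    St.act q.1 r * St.act (replaceAtL E q.2 X i' p') s).sum := by
                intro X i' p' Ti' hsz' hlen' hW' hsub'
                have hXsq := WL_le_sq X
                rw [hsz'] at hXsq
                have hwlt : n * n - WL X < w := by rw [← hw]; omega
                exact ihw (n * n - WL X) hwlt X i' p' r E Ti' hsz' hlen' rfl hsub' s
              have hN : ∀ u ∈ attL cH (c2 :: cL2),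
                  sizeL (fill ([Frame.deeper [] d0 []] : Ctx (Derivation k R R)) u) = n
                  ∧ (fill ([Frame.deeper [] d0 []] : Ctx (Derivation k R R)) u).length = m
                  ∧ WL ([LSub.mk d0 (cH :: c2 :: cL2)] : LTree (Derivation k R R)) + 1
                      ≤ WL (fill ([Frame.deeper [] d0 []] : Ctx (Derivation k R R)) u) := by
                intro u hu
                have hWu := attL_W cH (c2 :: cL2) u hu
                have hSu := attL_size cH (c2 :: cL2) u hu
                have h1 := sizeS_pos cH
                refine ⟨?_, ?_, ?_⟩
                · show sizeL [LSub.mk d0 u] = n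
                  simp only [sizeL_cons, sizeL_nil, sizeS_mk]
                  omega
                · show ([LSub.mk d0 u] : LTree (Derivation k R R)).length = m
                  rw [hm1]; rfl
                · show WL ([LSub.mk d0 (cH :: c2 :: cL2)] : LTree (Derivation k R R)) + 1
                      ≤ WL [LSub.mk d0 u]
                  have e1 : WL ([LSub.mk d0 (cH :: c2 :: cL2)] : LTree (Derivation k R R))
                      = 1 + (WS cH + (WS c2 + WL cL2)) + (sizeS cH + (sizeS c2 + sizeL cL2)) := by
                    simp
                  have e2 : WL ([LSub.mk d0 u] : LTree (Derivation k R R))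
                      = 1 + WL u + sizeL u := by simp
                  have e3 : WL (c2 :: cL2) = WS c2 + WL cL2 := by simp
                  have e4 : sizeL (c2 :: cL2) = sizeS c2 + sizeL cL2 := by simp
                  omega
              have hcarry := St.attcarry r s E cH p'' Ti hsub n m
                (WL ([LSub.mk d0 (cH :: c2 :: cL2)] : LTree (Derivation k R R)) + 1) HLB
                (sizeL (c2 :: cL2)) (c2 :: cL2) le_rfl [Frame.deeper [] d0 []] hN
              simp only [fill, fillF, List.nil_append] at hcarry
              rw [eq_sub_of_add_eq hkey', hGG, hcarry, ← sum_map_sub]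
              refine congrArg _ (List.map_congr_left fun q _ => ?_)
              have h6 := St.key' d0 (replaceAtS E q.2 cH p'') (c2 :: cL2) s
              linear_combination (-(St.act q.1 r)) * h6

end Setup

end CAL
/-- **Theorem.** Let `R` be a commutative `k`-algebra and `∇` a connection on `Der(R)`.
The `kLT(Der R)`-module algebra structure on `R` determined by the rules of the
construction — `v(E)` acts as `E`, `u(E; v(F))` acts as `∇_F E`, and (coherence) any
subtree whose root has one child and which acts as a derivation may be replaced by the
corresponding two-node tree — is Leibnitz. -/
theorem construction_action_is_leibnitz
    (k R : Type) [Field k] [CommRing R] [Algebra k R]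
    (c : Derivation k R R → Derivation k R R → Derivation k R R)
    (hc : IsConnection k R c)
    (act : LTree (Derivation k R R) → R → R)
    (hact : IsTreeAction k R act)
    (hcoh : IsCoherent k R act)
    -- every subtree whose root has a single child acts as some derivation
    (hder : ∀ s : LSub (Derivation k R R), ∃ E : Derivation k R R, ∀ f, act [s] f = E f)
    -- `v(E)` acts as `E`
    (hv : ∀ (E : Derivation k R R) (f : R), act (vT E) f = E f)
    -- `u(E; v(F))` acts as `∇_F E`
    (hu : ∀ (E F : Derivation k R R) (f : R), act (uT E [vT F]) f = (c F E) f) :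
    IsLeibnitz k R act := by
  intro T i p D₀ Ti hsub r E hD s
  subst hD
  exact CAL.Setup.grand ⟨c, hc, act, hact, hcoh, hder, hv, hu⟩
    (sizeL T) T.length (sizeL T * sizeL T - CAL.WL T) T i p r E Ti rfl rfl rfl hsub s
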